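/- (Square-summability of steps, proved in Lemma 2.1(iii)) The series Σ_{k=0}^∞ ‖x^k − x^{k−1}‖₂² converges; more precisely, for every t ≥ 0, (β/2)(1 − ᾱ²) Σ_{k=0}^t ‖x^k − x^{k−1}‖₂² ≤ F(x⁰, ε⁰) − inf{F(x,0) : F(x,0) ≤ F(x⁰, ε⁰)}. -/

import Mathlib

open Filter
open scoped BigOperators InnerProductSpace

noncomputable section

/-- Real n-dimensional Euclidean space. -/
abbrev Vec (n : ℕ) := EuclideanSpace ℝ (Fin n)

/-- The smoothed objective `F(x, ε) = f(x) + λ ∑ᵢ (|xᵢ| + εᵢ)^p`. -/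
def Fobj (n : ℕ) (p lam : ℝ) (f : Vec n → ℝ) (z : Vec n) (ε : Fin n → ℝ) : ℝ :=
  f z + lam * ∑ i, (|z i| + ε i) ^ p

/-- The merit function `ψ(x, y, ε) = F(x, ε) + (β/2)‖x − y‖²`. -/
def psiObj (n : ℕ) (p lam β : ℝ) (f : Vec n → ℝ) (z y : Vec n) (ε : Fin n → ℝ) : ℝ :=
  Fobj n p lam f z ε + β / 2 * ‖z - y‖ ^ 2

/-- The weighted-ℓ₁ subproblem objective at iteration `k`:
`⟨∇f(yₖ), z⟩ + (β/2)‖z − yₖ‖² + λ ∑ᵢ wᵢᵏ |zᵢ|` with `wᵢᵏ = p(|xᵢᵏ| + εᵢᵏ)^{p−1}`. -/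
def subObj (n : ℕ) (p lam β : ℝ) (f : Vec n → ℝ) (xk yk : Vec n) (εk : Fin n → ℝ)
    (z : Vec n) : ℝ :=
  ⟪gradient f yk, z⟫_ℝ + β / 2 * ‖z - yk‖ ^ 2
    + lam * ∑ i, (p * (|xk i| + εk i) ^ (p - 1)) * |z i|

/-- All the hypotheses of the EIRL1 algorithm (Algorithm 1) together with
Assumption 2.1.  The convention `x⁻¹ = x⁰` is encoded through truncated
subtraction on ℕ (`x (k-1) = x 0` for `k = 0`). -/
structure EIRL1 (n : ℕ) (p lam β Lf μ αbar : ℝ) (f : Vec n → ℝ)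
    (x y : ℕ → Vec n) (ε : ℕ → Fin n → ℝ) (α : ℕ → ℝ) : Prop where
  hn : 1 ≤ n
  hp0 : 0 < p
  hp1 : p < 1
  hlam : 0 < lam
  hμ0 : 0 < μ
  hμ1 : μ < 1
  hLf : 0 ≤ Lf
  hβ : Lf < β
  hconv : ConvexOn ℝ Set.univ f
  hdiff : ContDiff ℝ 1 f
  hlip : ∀ a b, ‖gradient f a - gradient f b‖ ≤ Lf * ‖a - b‖
  hαbar0 : 0 ≤ αbar
  hαbar1 : αbar < 1
  hα0 : ∀ k, 0 ≤ α k
  hα1 : ∀ k, α k ≤ αbar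
  hε0 : ∀ i, 0 < ε 0 i
  hεpos : ∀ k i, 0 < ε (k + 1) i
  hεdec : ∀ k i, ε (k + 1) i ≤ μ * ε k i
  hy : ∀ k, y k = x k + α k • (x k - x (k - 1))
  hmin : ∀ k z, z ≠ x (k + 1) →
    subObj n p lam β f (x k) (y k) (ε k) (x (k + 1)) < subObj n p lam β f (x k) (y k) (ε k) z
  hlevel : Bornology.IsBounded {z : Vec n | Fobj n p lam f z 0 ≤ Fobj n p lam f (x 0) (ε 0)}

/-! ### Auxiliary lemmas -/

lemma line_hasDerivAt {n : ℕ} (f : Vec n → ℝ) (hf : Differentiable ℝ f) (a v : Vec n) (t : ℝ) :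
    HasDerivAt (fun s : ℝ => f (a + s • v)) ⟪gradient f (a + t • v), v⟫_ℝ t := by
  have hg : HasGradientAt f (gradient f (a + t • v)) (a + t • v) :=
    (hf (a + t • v)).hasGradientAt
  rw [hasGradientAt_iff_hasFDerivAt] at hg
  have hc : HasDerivAt (fun s : ℝ => a + s • v) v t := by
    simpa using ((hasDerivAt_id t).smul_const v).const_add a
  have := hg.comp_hasDerivAt t hc
  convert this using 1
  · rfl
  · rfl
  · rfl
  · simp

lemma grad_convex_ineq {n : ℕ} (f : Vec n → ℝ) (hf : Differentiable ℝ f)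
    (hconv : ConvexOn ℝ Set.univ f) (a b : Vec n) :
    f a + ⟪gradient f a, b - a⟫_ℝ ≤ f b := by
  set v := b - a with hv
  have hg : ConvexOn ℝ Set.univ (fun s : ℝ => f (a + s • v)) := by
    have := hconv.comp_affineMap (AffineMap.lineMap a b : ℝ →ᵃ[ℝ] Vec n)
    have he : (fun s : ℝ => f (a + s • v)) = f ∘ (AffineMap.lineMap a b : ℝ →ᵃ[ℝ] Vec n) := by
      funext s
      simp only [Function.comp_apply, AffineMap.lineMap_apply, hv, vsub_eq_sub, vadd_eq_add,
        add_comm]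
    rw [he]; simpa using this
  have hd : HasDerivAt (fun s : ℝ => f (a + s • v)) ⟪gradient f a, v⟫_ℝ 0 := by
    simpa using line_hasDerivAt f hf a v 0
  have := hg.le_slope_of_hasDerivAt (Set.mem_univ (0:ℝ)) (Set.mem_univ (1:ℝ)) one_pos hd
  rw [slope_def_field] at this
  simp only [zero_smul, add_zero, one_smul] at this
  have h1 : a + v = b := by rw [hv]; abel
  rw [h1] at this
  linarith [this]

lemma descent_lemma {n : ℕ} (f : Vec n → ℝ) (hf : Differentiable ℝ f) {Lf : ℝ}
    (hlip : ∀ a b, ‖gradient f a - gradient f b‖ ≤ Lf * ‖a - b‖) (a b : Vec n) :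
    f b ≤ f a + ⟪gradient f a, b - a⟫_ℝ + Lf / 2 * ‖b - a‖ ^ 2 := by
  set v := b - a with hv
  set h : ℝ → ℝ := fun t => f (a + t • v) - t * ⟪gradient f a, v⟫_ℝ - Lf / 2 * t ^ 2 * ‖v‖ ^ 2
    with hh
  have hd : ∀ t : ℝ, HasDerivAt h
      (⟪gradient f (a + t • v), v⟫_ℝ - ⟪gradient f a, v⟫_ℝ - Lf * t * ‖v‖ ^ 2) t := by
    intro t
    have h1 := line_hasDerivAt f hf a v t
    have h2 : HasDerivAt (fun t : ℝ => t * ⟪gradient f a, v⟫_ℝ) ⟪gradient f a, v⟫_ℝ t := by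
      simpa using (hasDerivAt_id t).mul_const ⟪gradient f a, v⟫_ℝ
    have h3 : HasDerivAt (fun t : ℝ => Lf / 2 * t ^ 2 * ‖v‖ ^ 2) (Lf * t * ‖v‖ ^ 2) t := by
      have := ((hasDerivAt_pow 2 t).const_mul (Lf / 2)).mul_const (‖v‖ ^ 2)
      convert this using 1
      · rfl
      · rfl
      · ring
    convert (h1.sub h2).sub h3 using 1
    · rfl
    · rfl
    · rfl
  have hmono : AntitoneOn h (Set.Icc (0:ℝ) 1) := by
    apply antitoneOn_of_deriv_nonpos (convex_Icc 0 1)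
    · exact fun t _ => (hd t).continuousAt.continuousWithinAt
    · exact fun t _ => (hd t).differentiableAt.differentiableWithinAt
    · intro t ht
      rw [interior_Icc] at ht
      rw [(hd t).deriv]
      have hc : ⟪gradient f (a + t • v) - gradient f a, v⟫_ℝ ≤
          ‖gradient f (a + t • v) - gradient f a‖ * ‖v‖ :=
        real_inner_le_norm _ _
      have hl : ‖gradient f (a + t • v) - gradient f a‖ ≤ Lf * (t * ‖v‖) := by
        have := hlip (a + t • v) a
        simpa [norm_smul, abs_of_nonneg ht.1.le] using this
      have hnv : (0:ℝ) ≤ ‖v‖ := norm_nonneg _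
      have := hc.trans (by nlinarith : ‖gradient f (a + t • v) - gradient f a‖ * ‖v‖ ≤
        Lf * t * ‖v‖ ^ 2)
      rw [inner_sub_left] at this
      linarith
  have := hmono (Set.left_mem_Icc.2 zero_le_one) (Set.right_mem_Icc.2 zero_le_one) zero_le_one
  have hb : a + (1:ℝ) • v = b := by rw [hv]; simp
  simp only [hh, hb, zero_smul, add_zero, one_pow, zero_pow, mul_zero, zero_mul, sub_zero,
    one_mul] at this
  linarith

lemma norm_combo_sq {n : ℕ} (u w : Vec n) (t : ℝ) :
    ‖(1 - t) • u + t • w‖ ^ 2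
      = (1 - t) * ‖u‖ ^ 2 + t * ‖w‖ ^ 2 - t * (1 - t) * ‖u - w‖ ^ 2 := by
  have hA : ‖(1 - t) • u + t • w‖ ^ 2
      = ((1-t) * (1-t)) * ‖u‖ ^ 2 + 2 * ((1-t) * (t * ⟪u, w⟫_ℝ)) + (t * t) * ‖w‖ ^ 2 := by
    rw [norm_add_sq_real, real_inner_smul_left, real_inner_smul_right, norm_smul, norm_smul]
    rw [mul_pow, mul_pow, Real.norm_eq_abs, Real.norm_eq_abs, sq_abs, sq_abs]
    ring
  have hB : ‖u - w‖ ^ 2 = ‖u‖ ^ 2 - 2 * ⟪u, w⟫_ℝ + ‖w‖ ^ 2 := norm_sub_sq_real u w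
  rw [hA, hB]; ring

lemma rpow_concave_tangent {p r s : ℝ} (hp0 : 0 < p) (hp1 : p ≤ 1) (hr : 0 < r) (hs : 0 ≤ s) :
    s ^ p ≤ r ^ p + p * r ^ (p - 1) * (s - r) := by
  have key : (1 + (s / r - 1)) ^ p ≤ 1 + p * (s / r - 1) :=
    rpow_one_add_le_one_add_mul_self (by
      have : 0 ≤ s / r := div_nonneg hs hr.le
      linarith) hp0.le hp1
  have h1 : (1 : ℝ) + (s / r - 1) = s / r := by ring
  rw [h1] at key
  have h2 : s ^ p = r ^ p * (s / r) ^ p := by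
    rw [← Real.mul_rpow hr.le (div_nonneg hs hr.le), mul_div_cancel₀ _ hr.ne']
  have hrp : (0:ℝ) < r ^ p := Real.rpow_pos_of_pos hr _
  have h3 : r ^ (p - 1) = r ^ p / r := Real.rpow_sub_one hr.ne' p
  calc s ^ p = r ^ p * (s / r) ^ p := h2
    _ ≤ r ^ p * (1 + p * (s / r - 1)) := by nlinarith
    _ = r ^ p + p * r ^ (p - 1) * (s - r) := by
        rw [h3]; field_simp

lemma strong_min {n : ℕ} {p lam β : ℝ} {f : Vec n → ℝ} {xk yk m : Vec n} {εk : Fin n → ℝ}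
    (hβ : 0 < β) (hlam : 0 ≤ lam)
    (hw : ∀ i, 0 ≤ p * (|xk i| + εk i) ^ (p - 1))
    (hmin : ∀ z, subObj n p lam β f xk yk εk m ≤ subObj n p lam β f xk yk εk z)
    (z : Vec n) :
    subObj n p lam β f xk yk εk m + β / 2 * ‖z - m‖ ^ 2 ≤ subObj n p lam β f xk yk εk z := by
  set G := gradient f yk with hG
  set w : Fin n → ℝ := fun i => p * (|xk i| + εk i) ^ (p - 1) with hwdef
  set g := subObj n p lam β f xk yk εk with hg
  have gdef : ∀ v : Vec n, g v = ⟪G, v⟫_ℝ + β / 2 * ‖v - yk‖ ^ 2 + lam * ∑ i, w i * |v i| :=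
    fun v => rfl
  have combo : ∀ t : ℝ, 0 ≤ t → t ≤ 1 →
      g ((1 - t) • m + t • z) ≤ (1 - t) * g m + t * g z - β / 2 * t * (1 - t) * ‖z - m‖ ^ 2 := by
    intro t ht0 ht1
    have e0 : (1 - t) • m + t • z - yk = (1 - t) • (m - yk) + t • (z - yk) := by module
    have e1 : ‖(1 - t) • m + t • z - yk‖ ^ 2
        = (1 - t) * ‖m - yk‖ ^ 2 + t * ‖z - yk‖ ^ 2 - t * (1 - t) * ‖z - m‖ ^ 2 := by
      rw [e0, norm_combo_sq]
      have h4 : m - yk - (z - yk) = m - z := by abel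
      rw [h4, norm_sub_rev m z]
    have e2 : ⟪G, (1 - t) • m + t • z⟫_ℝ = (1 - t) * ⟪G, m⟫_ℝ + t * ⟪G, z⟫_ℝ := by
      rw [inner_add_right, real_inner_smul_right, real_inner_smul_right]
    have e3 : ∑ i, w i * |((1 - t) • m + t • z) i|
        ≤ (1 - t) * ∑ i, w i * |m i| + t * ∑ i, w i * |z i| := by
      rw [Finset.mul_sum, Finset.mul_sum, ← Finset.sum_add_distrib]
      apply Finset.sum_le_sum
      intro i _
      have hco : ((1 - t) • m + t • z) i = (1 - t) * m i + t * z i := by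
        simp [PiLp.add_apply, PiLp.smul_apply, smul_eq_mul]
      rw [hco]
      have habs : |(1 - t) * m i + t * z i| ≤ (1 - t) * |m i| + t * |z i| := by
        calc |(1 - t) * m i + t * z i| ≤ |(1 - t) * m i| + |t * z i| := abs_add_le _ _
          _ = (1 - t) * |m i| + t * |z i| := by
              rw [abs_mul, abs_mul, abs_of_nonneg (by linarith : (0:ℝ) ≤ 1 - t),
                abs_of_nonneg ht0]
      calc w i * |(1 - t) * m i + t * z i| ≤ w i * ((1 - t) * |m i| + t * |z i|) :=
            mul_le_mul_of_nonneg_left habs (hw i)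
        _ = (1 - t) * (w i * |m i|) + t * (w i * |z i|) := by ring
    calc g ((1 - t) • m + t • z)
        = ⟪G, (1 - t) • m + t • z⟫_ℝ + β / 2 * ‖(1 - t) • m + t • z - yk‖ ^ 2
            + lam * ∑ i, w i * |((1 - t) • m + t • z) i| := gdef _
      _ ≤ ⟪G, (1 - t) • m + t • z⟫_ℝ + β / 2 * ‖(1 - t) • m + t • z - yk‖ ^ 2
            + lam * ((1 - t) * ∑ i, w i * |m i| + t * ∑ i, w i * |z i|) := by
          have := mul_le_mul_of_nonneg_left e3 hlam
          linarith
      _ = (1 - t) * g m + t * g z - β / 2 * t * (1 - t) * ‖z - m‖ ^ 2 := by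
          rw [e1, e2, gdef m, gdef z]; ring
  have key : ∀ t : ℝ, 0 < t → t < 1 → g m + β / 2 * (1 - t) * ‖z - m‖ ^ 2 ≤ g z := by
    intro t ht0 ht1
    have h1 := combo t ht0.le ht1.le
    have h2 := hmin ((1 - t) • m + t • z)
    have h3 : t * (g m + β / 2 * (1 - t) * ‖z - m‖ ^ 2) ≤ t * g z := by nlinarith
    exact (mul_le_mul_iff_right₀ ht0).1 h3
  have hc : (0:ℝ) ≤ β / 2 * ‖z - m‖ ^ 2 := by positivity
  have := le_of_forall_pos_le_add (a := g m + β / 2 * ‖z - m‖ ^ 2) (b := g z) ?_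
  · exact this
  intro δ hδ
  set c := β / 2 * ‖z - m‖ ^ 2 with hcdef
  set t : ℝ := min (1/2) (δ / (c + 1)) with htdef
  have ht0 : 0 < t := lt_min (by norm_num) (div_pos hδ (by linarith))
  have ht1 : t < 1 := lt_of_le_of_lt (min_le_left _ _) (by norm_num)
  have hk := key t ht0 ht1
  have htδ : c * t ≤ δ := by
    have h5 : t ≤ δ / (c + 1) := min_le_right _ _
    have h6 : c * t ≤ c * (δ / (c + 1)) := mul_le_mul_of_nonneg_left h5 hc
    have h7 : c * (δ / (c + 1)) ≤ δ := by
      rw [mul_div_assoc']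
      rw [div_le_iff₀ (by linarith : (0:ℝ) < c + 1)]
      nlinarith
    linarith
  have : g m + c - c * t ≤ g z := by
    have : β / 2 * (1 - t) * ‖z - m‖ ^ 2 = c - c * t := by rw [hcdef]; ring
    linarith [hk, this.symm.le]
  linarith

lemma eirl1_step {n : ℕ} {p lam β Lf μ αbar : ℝ} {f : Vec n → ℝ}
    {x y : ℕ → Vec n} {ε : ℕ → Fin n → ℝ} {α : ℕ → ℝ}
    (H : EIRL1 n p lam β Lf μ αbar f x y ε α) (k : ℕ) :
    Fobj n p lam f (x (k+1)) (ε (k+1)) + β / 2 * ‖x (k+1) - x k‖ ^ 2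
      ≤ Fobj n p lam f (x k) (ε k) + β / 2 * αbar ^ 2 * ‖x k - x (k-1)‖ ^ 2 := by
  have hf : Differentiable ℝ f := H.hdiff.differentiable one_ne_zero
  have hβpos : 0 < β := lt_of_le_of_lt H.hLf H.hβ
  have εpos : ∀ j i, 0 < ε j i := by
    intro j i; cases j
    · exact H.hε0 i
    · exact H.hεpos _ i
  have hrpos : ∀ i, 0 < |x k i| + ε k i := fun i => by
    have := εpos k i; positivity
  have hw : ∀ i, 0 ≤ p * (|x k i| + ε k i) ^ (p - 1) := fun i =>
    (mul_pos H.hp0 (Real.rpow_pos_of_pos (hrpos i) _)).le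
  have hminle : ∀ z, subObj n p lam β f (x k) (y k) (ε k) (x (k+1))
      ≤ subObj n p lam β f (x k) (y k) (ε k) z := by
    intro z
    by_cases hz : z = x (k+1)
    · subst hz; exact le_rfl
    · exact (H.hmin k z hz).le
  have hstrong := strong_min hβpos H.hlam.le hw hminle (x k)
  rw [norm_sub_rev (x k)] at hstrong
  have hstrong' : ⟪gradient f (y k), x (k+1)⟫_ℝ + β/2 * ‖x (k+1) - y k‖^2
      + lam * ∑ i, (p * (|x k i| + ε k i) ^ (p - 1)) * |x (k+1) i|
      + β/2 * ‖x (k+1) - x k‖^2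
      ≤ ⟪gradient f (y k), x k⟫_ℝ + β/2 * ‖x k - y k‖^2
      + lam * ∑ i, (p * (|x k i| + ε k i) ^ (p - 1)) * |x k i| := by
    unfold subObj at hstrong; linarith
  have hdesc := descent_lemma f hf H.hlip (y k) (x (k+1))
  rw [inner_sub_right] at hdesc
  have hconvi := grad_convex_ineq f hf H.hconv (y k) (x k)
  rw [inner_sub_right] at hconvi
  have hconc : ∑ i, (|x (k+1) i| + ε (k+1) i) ^ p
      ≤ ∑ i, ((|x k i| + ε k i) ^ p
        + ((p * (|x k i| + ε k i) ^ (p - 1)) * |x (k+1) i|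
           - (p * (|x k i| + ε k i) ^ (p - 1)) * |x k i|)) := by
    apply Finset.sum_le_sum
    intro i _
    have ht := rpow_concave_tangent H.hp0 H.hp1.le (hrpos i)
      (by have := εpos (k+1) i; positivity : (0:ℝ) ≤ |x (k+1) i| + ε (k+1) i)
    have hεle : ε (k+1) i ≤ ε k i := by
      have h1 := H.hεdec k i
      have h2 := (εpos k i).le
      nlinarith [H.hμ1]
    nlinarith [hw i, ht, mul_le_mul_of_nonneg_left hεle (hw i)]
  rw [Finset.sum_add_distrib, Finset.sum_sub_distrib] at hconc
  have hsum := mul_le_mul_of_nonneg_left hconc H.hlam.le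
  have hxy : ‖x k - y k‖^2 = α k ^ 2 * ‖x k - x (k-1)‖^2 := by
    have h1 : x k - y k = -(α k • (x k - x (k-1))) := by
      rw [H.hy k]; module
    rw [h1, norm_neg, norm_smul, Real.norm_eq_abs, abs_of_nonneg (H.hα0 k), mul_pow]
  have hαsq : α k ^ 2 ≤ αbar ^ 2 := pow_le_pow_left₀ (H.hα0 k) (H.hα1 k) 2
  have hA6 : β/2 * ‖x k - y k‖^2 ≤ β/2 * αbar^2 * ‖x k - x (k-1)‖^2 := by
    rw [hxy]
    have h1 : α k ^2 * ‖x k - x (k-1)‖^2 ≤ αbar^2 * ‖x k - x (k-1)‖^2 :=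
      mul_le_mul_of_nonneg_right hαsq (sq_nonneg _)
    nlinarith
  have hA5 : Lf/2 * ‖x (k+1) - y k‖^2 ≤ β/2 * ‖x (k+1) - y k‖^2 := by
    nlinarith [sq_nonneg ‖x (k+1) - y k‖, H.hβ]
  unfold Fobj
  nlinarith [hdesc, hconvi, hstrong', hsum, hA5, hA6]

/-- Square-summability of the steps (proved within Lemma 2.1(iii)). -/
theorem stmt_5 (n : ℕ) (p lam β Lf μ αbar : ℝ) (f : Vec n → ℝ)
    (x y : ℕ → Vec n) (ε : ℕ → Fin n → ℝ) (α : ℕ → ℝ)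
    (H : EIRL1 n p lam β Lf μ αbar f x y ε α) :
    Summable (fun k => ‖x k - x (k - 1)‖ ^ 2) ∧
      ∀ t : ℕ,
        β / 2 * (1 - αbar ^ 2) * ∑ k ∈ Finset.range (t + 1), ‖x k - x (k - 1)‖ ^ 2
          ≤ Fobj n p lam f (x 0) (ε 0)
            - sInf ((fun z => Fobj n p lam f z 0) ''
                {z : Vec n | Fobj n p lam f z 0 ≤ Fobj n p lam f (x 0) (ε 0)}) := by
  classical
  have hβpos : 0 < β := lt_of_le_of_lt H.hLf H.hβ
  have εpos : ∀ j i, 0 < ε j i := by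
    intro j i; cases j
    · exact H.hε0 i
    · exact H.hεpos _ i
  set ψ : ℕ → ℝ := fun j => Fobj n p lam f (x j) (ε j) + β / 2 * ‖x j - x (j-1)‖ ^ 2
    with hψdef
  have ψ_def' : ∀ j, ψ j = Fobj n p lam f (x j) (ε j) + β / 2 * ‖x j - x (j-1)‖ ^ 2 :=
    fun j => by rw [hψdef]
  have ψ_succ : ∀ k, ψ (k+1)
      = Fobj n p lam f (x (k+1)) (ε (k+1)) + β / 2 * ‖x (k+1) - x k‖ ^ 2 := by
    intro k
    rw [ψ_def']
    norm_num
  have hψ0 : ψ 0 = Fobj n p lam f (x 0) (ε 0) := by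
    rw [ψ_def']
    norm_num
  have hFψ : ∀ k, Fobj n p lam f (x k) (ε k) ≤ ψ k := by
    intro k
    rw [ψ_def']
    have : (0:ℝ) ≤ β / 2 * ‖x k - x (k-1)‖ ^ 2 := by positivity
    linarith
  clear_value ψ
  have hd0 : ∀ k : ℕ, (0:ℝ) ≤ ‖x k - x (k-1)‖ ^ 2 := fun k => by positivity
  have hα2 : (0:ℝ) < 1 - αbar ^ 2 := by nlinarith [H.hαbar1, H.hαbar0]
  have hcc : 0 < β / 2 * (1 - αbar ^ 2) := mul_pos (by linarith) hα2
  have ψstep : ∀ k, ψ (k+1) + β / 2 * (1 - αbar ^ 2) * ‖x k - x (k-1)‖ ^ 2 ≤ ψ k := by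
    intro k
    have h := eirl1_step H k
    rw [ψ_succ k, ψ_def' k]
    nlinarith [h]
  have tel : ∀ t, β / 2 * (1 - αbar ^ 2) * (∑ k ∈ Finset.range (t+1), ‖x k - x (k-1)‖ ^ 2)
      + ψ (t+1) ≤ ψ 0 := by
    intro t
    induction t with
    | zero =>
        have := ψstep 0
        rw [Finset.sum_range_succ, Finset.sum_range_zero]
        linarith
    | succ t ih =>
        have h := ψstep (t+1)
        rw [Finset.sum_range_succ]
        nlinarith [ih, h]
  have ψle0 : ∀ k, ψ k ≤ ψ 0 := by
    intro k
    induction k with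
    | zero => exact le_rfl
    | succ k ih =>
        have h := ψstep k
        have h2 : 0 ≤ β / 2 * (1 - αbar ^ 2) * ‖x k - x (k-1)‖ ^ 2 :=
          mul_nonneg hcc.le (hd0 k)
        linarith
  have hFε : ∀ k, Fobj n p lam f (x k) 0 ≤ Fobj n p lam f (x k) (ε k) := by
    intro k
    unfold Fobj
    have hsle : ∑ i, (|x k i| + (0 : Fin n → ℝ) i) ^ p ≤ ∑ i, (|x k i| + ε k i) ^ p := by
      apply Finset.sum_le_sum
      intro i _
      apply Real.rpow_le_rpow (by simp [abs_nonneg]) _ H.hp0.le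
      have := (εpos k i).le
      simp only [Pi.zero_apply, add_zero]
      linarith
    nlinarith [mul_le_mul_of_nonneg_left hsle H.hlam.le]
  have hmem : ∀ k, x k ∈ {z : Vec n | Fobj n p lam f z 0 ≤ Fobj n p lam f (x 0) (ε 0)} := by
    intro k
    have := (hFε k).trans ((hFψ k).trans ((ψle0 k).trans_eq hψ0))
    exact this
  have hFcont : Continuous (fun z : Vec n => Fobj n p lam f z 0) := by
    unfold Fobj
    apply (H.hdiff.continuous).add
    apply Continuous.mul continuous_const
    apply continuous_finset_sum
    intro i _
    have h1 : Continuous (fun z : Vec n => |z i| + (0 : Fin n → ℝ) i) :=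
      (continuous_abs.comp (EuclideanSpace.proj (𝕜 := ℝ) i).continuous).add continuous_const
    exact h1.rpow_const (fun z => Or.inr H.hp0.le)
  have hSclosed : IsClosed {z : Vec n | Fobj n p lam f z 0 ≤ Fobj n p lam f (x 0) (ε 0)} :=
    isClosed_le hFcont continuous_const
  have hScomp : IsCompact {z : Vec n | Fobj n p lam f z 0 ≤ Fobj n p lam f (x 0) (ε 0)} :=
    Metric.isCompact_of_isClosed_isBounded hSclosed H.hlevel
  have hBdd : BddBelow ((fun z => Fobj n p lam f z 0) ''
      {z : Vec n | Fobj n p lam f z 0 ≤ Fobj n p lam f (x 0) (ε 0)}) :=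
    hScomp.bddBelow_image hFcont.continuousOn
  set mstar := sInf ((fun z => Fobj n p lam f z 0) ''
      {z : Vec n | Fobj n p lam f z 0 ≤ Fobj n p lam f (x 0) (ε 0)}) with hmstar
  clear_value mstar
  have hmψ : ∀ k, mstar ≤ ψ k := by
    intro k
    have h1 : mstar ≤ Fobj n p lam f (x k) 0 := by
      rw [hmstar]; exact csInf_le hBdd ⟨x k, hmem k, rfl⟩
    exact h1.trans ((hFε k).trans (hFψ k))
  have hbound : ∀ t, β / 2 * (1 - αbar ^ 2) * (∑ k ∈ Finset.range (t+1), ‖x k - x (k-1)‖ ^ 2)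
      ≤ Fobj n p lam f (x 0) (ε 0) - mstar := by
    intro t
    have h1 := tel t
    have h2 := hmψ (t+1)
    rw [hψ0] at h1
    linarith
  have hF0m : 0 ≤ Fobj n p lam f (x 0) (ε 0) - mstar := by
    have := hmψ 0
    rw [hψ0] at this
    linarith
  constructor
  · apply summable_of_sum_range_le (c := (Fobj n p lam f (x 0) (ε 0) - mstar)
      / (β / 2 * (1 - αbar ^ 2))) (fun k => hd0 k)
    intro N
    rcases N with _ | t
    · simp only [Finset.range_zero, Finset.sum_empty]
      positivity
    · rw [le_div_iff₀ hcc]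
      have := hbound t
      linarith [this]
  · intro t
    exact hbound t
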